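/- Every continuous derivation m : L̂(V) → L̂(V) of the pro-free (completed free) Lie algebra on a finite-dimensional vector space V extends uniquely to a continuous derivation of the completed tensor algebra T̂(V) that is also a coderivation with respect to the shuffle coproduct (a Hopf algebra derivation); conversely, every continuous Hopf algebra derivation of T̂(V) restricts to a derivation of L̂(V). -/

import Mathlib

open TensorProduct

noncomputable section

variable (V : Type) [AddCommGroup V] [Module ℚ V] [FiniteDimensional ℚ V]

abbrev TA := TensorAlgebra ℚ V

attribute [local instance 100] LieRing.ofAssociativeRing

/-- x ↦ x ⊗ 1. -/
noncomputable def rUnit : TA V →ₗ[ℚ] TA V ⊗[ℚ] TA V :=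
  (TensorProduct.mk ℚ (TA V) (TA V)).flip 1

/-- x ↦ 1 ⊗ x. -/
noncomputable def lUnit : TA V →ₗ[ℚ] TA V ⊗[ℚ] TA V :=
  TensorProduct.mk ℚ (TA V) (TA V) 1

/-- The coproduct of the tensor Hopf algebra (concatenation product, the
coproduct for which elements of V are primitive — the one dual to the shuffle
product). -/
noncomputable def Δ : TensorAlgebra ℚ V →ₐ[ℚ] TA V ⊗[ℚ] TA V :=
  TensorAlgebra.lift ℚ
    ((rUnit V) ∘ₗ TensorAlgebra.ι ℚ + (lUnit V) ∘ₗ TensorAlgebra.ι ℚ)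

/-- The free Lie algebra L(V) realized inside T(V) as the Lie subalgebra of the
commutator algebra generated by V. -/
noncomputable def freeLie : LieSubalgebra ℚ (TA V) :=
  LieSubalgebra.lieSpan ℚ (TA V) (Set.range (TensorAlgebra.ι ℚ : V →ₗ[ℚ] TA V))

/- STATEMENT 9: Every derivation m of the free Lie algebra L(V) on a
finite-dimensional vector space V extends uniquely to a derivation of the
tensor algebra T(V) that is also a coderivation with respect to the shuffle
coproduct (a Hopf algebra derivation); conversely, every Hopf algebra
derivation of T(V) restricts to a derivation of L(V).  (This is the
polynomial form of the statement for the pro-free Lie algebra L̂(V) inside the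
completed tensor algebra T̂(V) = ∏ᵢ V^{⊗i}; completions are suppressed.) -/
-- ===================== auxiliary development =====================
namespace Aux

set_option linter.unusedSectionVars false
set_option maxHeartbeats 1000000
set_option synthInstance.maxHeartbeats 1000000

variable {V}

local notation "ιQ" => TensorAlgebra.ι ℚ (M := V)

lemma Δ_ι (v : V) : Δ V (ιQ v) = ιQ v ⊗ₜ[ℚ] 1 + 1 ⊗ₜ[ℚ] ιQ v := by
  simp [Δ, TensorAlgebra.lift_ι_apply, rUnit, lUnit]

/-- counit -/
noncomputable def εa : TA V →ₐ[ℚ] ℚ := TensorAlgebra.lift ℚ (0 : V →ₗ[ℚ] ℚ)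

@[simp] lemma εa_ι (v : V) : εa (ιQ v) = 0 := by
  simp [εa, TensorAlgebra.lift_ι_apply]

lemma ι_mem_freeLie (v : V) : ιQ v ∈ freeLie V :=
  LieSubalgebra.subset_lieSpan ⟨v, rfl⟩

section DerLift
variable (f : V →ₗ[ℚ] TA V)

noncomputable def gend (v : V) : TA V × TA V →ₗ[ℚ] TA V × TA V where
  toFun p := (ιQ v * p.1, f v * p.1 + ιQ v * p.2)
  map_add' p q := by
    simp only [Prod.fst_add, Prod.snd_add, mul_add, Prod.mk_add_mk, Prod.mk.injEq]
    exact ⟨trivial, by abel⟩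
  map_smul' c p := by
    simp only [Prod.smul_fst, Prod.smul_snd, RingHom.id_apply, Prod.smul_mk,
      mul_smul_comm, smul_add]

noncomputable def gmap : V →ₗ[ℚ] Module.End ℚ (TA V × TA V) where
  toFun := gend f
  map_add' v w := by
    refine LinearMap.ext fun p => ?_
    simp only [gend, map_add, add_mul, LinearMap.coe_mk, AddHom.coe_mk,
      LinearMap.add_apply, Prod.mk_add_mk, Prod.mk.injEq]
    exact ⟨trivial, by abel⟩
  map_smul' c v := by
    refine LinearMap.ext fun p => ?_
    simp only [gend, map_smul, smul_mul_assoc, LinearMap.coe_mk, AddHom.coe_mk,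
      RingHom.id_apply, LinearMap.smul_apply, Prod.smul_mk, smul_add]

noncomputable def σ : TA V →ₐ[ℚ] Module.End ℚ (TA V × TA V) :=
  TensorAlgebra.lift ℚ (gmap f)

noncomputable def dl : TA V →ₗ[ℚ] TA V where
  toFun x := (σ f x (1, 0)).2
  map_add' x y := by simp [map_add]
  map_smul' c x := by simp [map_smul]

lemma σ_ι (v : V) : σ f (ιQ v) = gend f v := TensorAlgebra.lift_ι_apply _ _

lemma dl_ι (v : V) : dl f (ιQ v) = f v := by
  simp [dl, σ_ι, gend]

lemma σ_apply : ∀ x (a b : TA V), σ f x (a, b) = (x * a, dl f x * a + x * b) := by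
  intro x
  induction x using TensorAlgebra.induction with
  | algebraMap r =>
      intro a b
      have h : σ f (algebraMap ℚ _ r) = algebraMap ℚ _ r := AlgHom.commutes _ r
      have hd : dl f (algebraMap ℚ _ r) = 0 := by
        simp [dl, h, Module.algebraMap_end_apply]
      rw [h, hd, Module.algebraMap_end_apply]
      simp [Algebra.smul_def, Prod.smul_mk]
  | ι v =>
      intro a b
      rw [σ_ι, dl_ι]
      simp [gend]
  | mul x y hx hy =>
      intro a b
      have hd : dl f (x * y) = dl f x * y + x * dl f y := by
        have h0 : dl f (x*y) = (σ f (x*y) (1,0)).2 := rfl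
        rw [h0, map_mul, Module.End.mul_apply, hy 1 0, hx (y * 1) (dl f y * 1 + y * 0)]
        simp [mul_add, mul_assoc]
      rw [map_mul, Module.End.mul_apply, hy a b, hx (y*a) (dl f y * a + y * b), hd]
      simp only [Prod.mk.injEq, mul_assoc]
      refine ⟨trivial, ?_⟩
      simp only [mul_add, add_mul, mul_assoc]
      abel
  | add x y hx hy =>
      intro a b
      have hd : dl f (x + y) = dl f x + dl f y := by simp [map_add]
      rw [map_add, LinearMap.add_apply, hx, hy, hd]
      simp only [Prod.mk_add_mk, Prod.mk.injEq, add_mul]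
      exact ⟨trivial, by abel⟩

lemma dl_mul (x y : TA V) : dl f (x * y) = dl f x * y + x * dl f y := by
  have h1 : dl f (x*y) = (σ f (x*y) (1,0)).2 := rfl
  rw [h1, map_mul, Module.End.mul_apply, σ_apply f y 1 0, σ_apply f x (y*1) (dl f y * 1 + y*0)]
  simp [mul_add, mul_assoc]

lemma dl_one : dl f 1 = 0 := by
  have h : dl f 1 = dl f 1 + dl f 1 := by simpa using dl_mul f 1 1
  exact (left_eq_add.mp h)

end DerLift


section Dynkin

noncomputable def hend (v : V) : ℚ × TA V →ₗ[ℚ] ℚ × TA V where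
  toFun p := (0, ⁅ιQ v, p.2⁆ + p.1 • ιQ v)
  map_add' p q := by
    simp only [Prod.fst_add, Prod.snd_add, lie_add, add_smul, Prod.mk_add_mk, Prod.mk.injEq,
      add_zero]
    exact ⟨trivial, by abel⟩
  map_smul' c p := by
    simp only [Prod.smul_fst, Prod.smul_snd, RingHom.id_apply, Prod.smul_mk, lie_smul,
      smul_add, smul_smul, smul_zero, smul_eq_mul, mul_zero]

noncomputable def hmap : V →ₗ[ℚ] Module.End ℚ (ℚ × TA V) where
  toFun := hend
  map_add' v w := by
    refine LinearMap.ext fun p => ?_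
    simp only [hend, map_add, add_lie, LinearMap.coe_mk, AddHom.coe_mk,
      LinearMap.add_apply, Prod.mk_add_mk, Prod.mk.injEq, add_zero, smul_add]
    exact ⟨trivial, by abel⟩
  map_smul' c v := by
    refine LinearMap.ext fun p => ?_
    simp only [hend, map_smul, smul_lie, LinearMap.coe_mk, AddHom.coe_mk,
      RingHom.id_apply, LinearMap.smul_apply, Prod.smul_mk, smul_add, smul_zero,
      smul_smul, smul_eq_mul, mul_comm]
    simp

noncomputable def τ : TA V →ₐ[ℚ] Module.End ℚ (ℚ × TA V) :=
  TensorAlgebra.lift ℚ hmap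

noncomputable def Dm : TA V →ₗ[ℚ] TA V where
  toFun x := (τ x (1, 0)).2
  map_add' x y := by simp [map_add]
  map_smul' c x := by simp [map_smul]

lemma τ_ι (v : V) : τ (ιQ v) = hend v := TensorAlgebra.lift_ι_apply _ _

lemma Dm_ι (v : V) : Dm (ιQ v) = ιQ v := by
  simp [Dm, τ_ι, hend]

lemma τ_zero (y : TA V) : (τ y ((0:ℚ), (0:TA V))).2 = 0 := by
  have h : ((0:ℚ), (0:TA V)) = (0 : ℚ × TA V) := rfl
  rw [h, map_zero]; rfl

lemma τ_apply : ∀ x : TA V, ∀ (c : ℚ) (w : TA V),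
    (τ x (0, w)).1 = 0 ∧ τ (V := V) x (c, w) = (εa x * c, (τ x (0, w)).2 + c • Dm x) := by
  intro x
  induction x using TensorAlgebra.induction with
  | algebraMap r =>
      intro c w
      have h : τ (V := V) (algebraMap ℚ _ r) = algebraMap ℚ _ r := AlgHom.commutes _ r
      have hd : Dm (V := V) (algebraMap ℚ _ r) = 0 := by
        simp [Dm, h, Module.algebraMap_end_apply]
      rw [h, hd]
      simp [Module.algebraMap_end_apply, Prod.smul_mk, mul_comm]
  | ι v =>
      intro c w
      rw [τ_ι, Dm_ι]
      simp [hend, Prod.smul_mk]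
  | mul x y hx hy =>
      intro c w
      have hDm : Dm (x * y) = (τ x (0, Dm y)).2 + εa y • Dm x := by
        have h0 : Dm (x*y) = (τ (x*y) (1,0)).2 := rfl
        rw [h0, map_mul, Module.End.mul_apply, (hy 1 0).2, (hx (εa y * 1) ((τ y (0,0)).2 + 1 • Dm y)).2]
        have hz : (τ (V := V) y (0, 0)).2 = 0 := τ_zero y
        simp [hz, smul_smul]
      constructor
      · rw [map_mul, Module.End.mul_apply, (hy 0 w).2]
        simp only [mul_zero, zero_smul, add_zero]
        exact (hx 0 _).1
      · rw [map_mul, Module.End.mul_apply, (hy c w).2,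
          (hx (εa y * c) ((τ y (0,w)).2 + c • Dm y)).2, hDm]
        rw [map_mul, Module.End.mul_apply, (hy 0 w).2,
          (hx (εa y * 0) ((τ y (0,w)).2 + 0 • Dm y)).2]
        simp only [mul_zero, zero_smul, add_zero, zero_add, map_add, Prod.mk.injEq]
        constructor
        · ring
        · have hlin : (τ x (0, (τ y (0,w)).2 + c • Dm y)).2
              = (τ x (0, (τ y (0,w)).2)).2 + c • (τ x (0, Dm y)).2 := by
            have e1 : ((0:ℚ), (τ (V := V) y (0,w)).2 + c • Dm y)
                = (0, (τ y (0,w)).2) + c • ((0:ℚ), Dm y) := by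
              simp [Prod.smul_mk]
            rw [e1, map_add, map_smul]
            simp
          rw [hlin]
          simp [smul_add, smul_smul, mul_comm]
          abel
  | add x y hx hy =>
      intro c w
      have hd : Dm (x + y) = Dm x + Dm y := by simp [map_add]
      constructor
      · rw [map_add, LinearMap.add_apply, Prod.fst_add, (hx 0 w).1, (hy 0 w).1, add_zero]
      · rw [map_add, LinearMap.add_apply, (hx c w).2, (hy c w).2, hd, map_add]
        simp only [Prod.mk_add_mk, Prod.mk.injEq, add_mul, smul_add]
        refine ⟨trivial, ?_⟩
        simp only [LinearMap.add_apply, Prod.snd_add]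
        abel

lemma Dm_mul_ι (v : V) (y : TA V) :
    Dm (ιQ v * y) = ⁅ιQ v, Dm y⁆ + εa y • ιQ v := by
  have h0 : Dm (ιQ v * y) = (τ (ιQ v * y) (1,0)).2 := rfl
  rw [h0, map_mul, Module.End.mul_apply, (τ_apply y 1 0).2, τ_ι]
  have hz : (τ (V := V) y (0, 0)).2 = 0 := τ_zero y
  simp [hend, hz]

lemma Dm_mem_freeLie (x : TA V) :
    Dm x ∈ freeLie V ∧ ∀ w ∈ freeLie V, (τ x (0, w)).2 ∈ freeLie V := by
  induction x using TensorAlgebra.induction with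
  | algebraMap r =>
      have h : τ (V := V) (algebraMap ℚ _ r) = algebraMap ℚ _ r := AlgHom.commutes _ r
      have hd : Dm (V := V) (algebraMap ℚ _ r) = 0 := by
        simp [Dm, h, Module.algebraMap_end_apply]
      refine ⟨hd ▸ (freeLie V).zero_mem, fun w hw => ?_⟩
      rw [h, Module.algebraMap_end_apply]
      exact Submodule.smul_mem (freeLie V).toSubmodule r hw
  | ι v =>
      refine ⟨by rw [Dm_ι]; exact ι_mem_freeLie v, fun w hw => ?_⟩
      rw [τ_ι]
      simp only [hend, LinearMap.coe_mk, AddHom.coe_mk, zero_smul, add_zero]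
      exact (freeLie V).lie_mem (ι_mem_freeLie v) hw
  | mul x y hx hy =>
      constructor
      · have hDm : Dm (x * y) = (τ x (0, Dm y)).2 + εa y • Dm x := by
          have h0 : Dm (x*y) = (τ (x*y) (1,0)).2 := rfl
          rw [h0, map_mul, Module.End.mul_apply, (τ_apply y 1 0).2,
            (τ_apply x (εa y * 1) ((τ y (0,0)).2 + 1 • Dm y)).2]
          have hz : (τ (V := V) y (0, 0)).2 = 0 := τ_zero y
          simp [hz, smul_smul]
        rw [hDm]
        exact (freeLie V).toSubmodule.add_mem (hx.2 _ hy.1)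
          (Submodule.smul_mem _ _ hx.1)
      · intro w hw
        rw [map_mul, Module.End.mul_apply]
        have h1 := (τ_apply y 0 w).1
        have h2 : τ (V := V) y (0, w) = (0, (τ y (0,w)).2) := Prod.ext h1 rfl
        rw [h2]
        exact hx.2 _ (hy.2 w hw)
  | add x y hx hy =>
      constructor
      · have : Dm (x + y) = Dm x + Dm y := by simp [map_add]
        rw [this]; exact (freeLie V).toSubmodule.add_mem hx.1 hy.1
      · intro w hw
        rw [map_add, LinearMap.add_apply, Prod.snd_add]
        exact (freeLie V).toSubmodule.add_mem (hx.2 w hw) (hy.2 w hw)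

end Dynkin


section Coder

/-- derivations kill 1 -/
lemma der_one (δ : TA V →ₗ[ℚ] TA V) (hδ : ∀ x y : TA V, δ (x*y) = δ x * y + x * δ y) :
    δ 1 = 0 := by
  have h : δ 1 = δ 1 + δ 1 := by simpa using hδ 1 1
  exact (left_eq_add.mp h)

noncomputable def Emap (δ : TA V →ₗ[ℚ] TA V) : TA V ⊗[ℚ] TA V →ₗ[ℚ] TA V ⊗[ℚ] TA V :=
  TensorProduct.map δ LinearMap.id + TensorProduct.map LinearMap.id δ

lemma Emap_tmul (δ : TA V →ₗ[ℚ] TA V) (a b : TA V) :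
    Emap δ (a ⊗ₜ[ℚ] b) = δ a ⊗ₜ[ℚ] b + a ⊗ₜ[ℚ] δ b := by
  simp [Emap]

lemma Emap_mul (δ : TA V →ₗ[ℚ] TA V) (hδ : ∀ x y : TA V, δ (x*y) = δ x * y + x * δ y)
    (u w : TA V ⊗[ℚ] TA V) : Emap δ (u * w) = Emap δ u * w + u * Emap δ w := by
  induction u using TensorProduct.induction_on with
  | zero => simp
  | tmul a b =>
      induction w using TensorProduct.induction_on with
      | zero => simp
      | tmul c d =>
          rw [Algebra.TensorProduct.tmul_mul_tmul, Emap_tmul, Emap_tmul, Emap_tmul,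
            hδ a c, hδ b d]
          simp only [add_mul, mul_add, Algebra.TensorProduct.tmul_mul_tmul,
            TensorProduct.add_tmul, TensorProduct.tmul_add]
          abel
      | add w1 w2 h1 h2 =>
          rw [mul_add, map_add, h1, h2, map_add]
          simp only [mul_add, add_mul]
          abel
  | add u1 u2 h1 h2 =>
      rw [add_mul, map_add, h1, h2, map_add]
      simp only [mul_add, add_mul]
      abel

/-- a derivation whose generator values are primitive is a coderivation -/
lemma coder_of_prim_gen (δ : TA V →ₗ[ℚ] TA V)
    (hδ : ∀ x y : TA V, δ (x*y) = δ x * y + x * δ y)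
    (hgen : ∀ v : V, Δ V (δ (ιQ v)) = δ (ιQ v) ⊗ₜ[ℚ] 1 + 1 ⊗ₜ[ℚ] δ (ιQ v)) :
    ∀ x : TA V, Δ V (δ x) = Emap δ (Δ V x) := by
  intro x
  induction x using TensorAlgebra.induction with
  | algebraMap r =>
      have : δ (algebraMap ℚ (TA V) r) = 0 := by
        rw [Algebra.algebraMap_eq_smul_one, map_smul, der_one δ hδ, smul_zero]
      rw [this, map_zero, AlgHom.commutes]
      have h1 : algebraMap ℚ (TA V ⊗[ℚ] TA V) r = r • (1 ⊗ₜ[ℚ] 1) := by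
        rw [Algebra.algebraMap_eq_smul_one]; rfl
      rw [h1, map_smul, Emap_tmul, der_one δ hδ]
      simp
  | ι v =>
      rw [hgen v, Δ_ι, map_add, Emap_tmul, Emap_tmul, der_one δ hδ]
      simp
  | mul x y hx hy =>
      rw [hδ x y, map_add, map_mul, map_mul, map_mul, hx, hy, Emap_mul δ hδ]
  | add x y hx hy =>
      rw [map_add, map_add, map_add, map_add, hx, hy]

/-- submodule of primitive elements -/
noncomputable def PrimS : Submodule ℚ (TA V) :=
  LinearMap.eqLocus (Δ V).toLinearMap (rUnit V + lUnit V)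

lemma mem_PrimS {x : TA V} : x ∈ PrimS (V := V) ↔ Δ V x = x ⊗ₜ[ℚ] 1 + 1 ⊗ₜ[ℚ] x := by
  constructor
  · intro h
    have : (Δ V).toLinearMap x = (rUnit V + lUnit V) x := h
    simpa [rUnit, lUnit] using this
  · intro h
    show (Δ V).toLinearMap x = (rUnit V + lUnit V) x
    simpa [rUnit, lUnit] using h

lemma freeLie_le_PrimS : ∀ x ∈ freeLie V, x ∈ PrimS (V := V) := by
  have h : freeLie V ≤
      { carrier := {x : TA V | x ∈ PrimS (V := V)}
        add_mem' := fun ha hb => PrimS.add_mem ha hb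
        zero_mem' := PrimS.zero_mem
        smul_mem' := fun c x hx => PrimS.smul_mem c hx
        lie_mem' := by
          intro a b ha hb
          rw [Set.mem_setOf_eq, mem_PrimS] at ha hb ⊢
          rw [Ring.lie_def, map_sub, map_mul, map_mul, ha, hb]
          simp only [add_mul, mul_add, Algebra.TensorProduct.tmul_mul_tmul, one_mul, mul_one]
          simp only [TensorProduct.sub_tmul, TensorProduct.tmul_sub]
          abel } := by
    rw [freeLie, LieSubalgebra.lieSpan_le]
    rintro _ ⟨v, rfl⟩
    show TensorAlgebra.ι ℚ v ∈ PrimS (V := V)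
    rw [mem_PrimS]
    exact Δ_ι v
  exact fun x hx => h hx

/-- coderivations with δ1 = 0 preserve primitives -/
lemma coder_preserves_prim (δ : TA V →ₗ[ℚ] TA V) (h1 : δ 1 = 0)
    (hc : ∀ x : TA V, Δ V (δ x) = Emap δ (Δ V x)) {x : TA V}
    (hx : x ∈ PrimS (V := V)) : δ x ∈ PrimS (V := V) := by
  rw [mem_PrimS] at hx ⊢
  rw [hc, hx, map_add, Emap_tmul, Emap_tmul, h1]
  simp

/-- derivations with generator values in freeLie preserve freeLie -/
lemma der_preserves_freeLie (δ : TA V →ₗ[ℚ] TA V)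
    (hδ : ∀ x y : TA V, δ (x*y) = δ x * y + x * δ y)
    (hgen : ∀ v : V, δ (ιQ v) ∈ freeLie V) :
    ∀ x ∈ freeLie V, δ x ∈ freeLie V := by
  have hbr : ∀ x y : TA V, δ ⁅x, y⁆ = ⁅δ x, y⁆ + ⁅x, δ y⁆ := by
    intro x y
    rw [Ring.lie_def, map_sub, hδ x y, hδ y x, Ring.lie_def, Ring.lie_def]
    abel
  have h : freeLie V ≤
      { carrier := {x : TA V | x ∈ freeLie V ∧ δ x ∈ freeLie V}
        add_mem' := fun ha hb => ⟨(freeLie V).add_mem ha.1 hb.1, by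
          rw [map_add]; exact (freeLie V).add_mem ha.2 hb.2⟩
        zero_mem' := ⟨(freeLie V).zero_mem, by rw [map_zero]; exact (freeLie V).zero_mem⟩
        smul_mem' := fun c x hx => ⟨(freeLie V).smul_mem c hx.1, by
          rw [map_smul]; exact (freeLie V).smul_mem c hx.2⟩
        lie_mem' := fun {a b} ha hb => ⟨(freeLie V).lie_mem ha.1 hb.1, by
          rw [hbr]
          exact (freeLie V).add_mem ((freeLie V).lie_mem ha.2 hb.1)
            ((freeLie V).lie_mem ha.1 hb.2)⟩ } := by
    rw [freeLie, LieSubalgebra.lieSpan_le]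
    rintro _ ⟨v, rfl⟩
    exact ⟨ι_mem_freeLie v, hgen v⟩
  exact fun x hx => ((h hx).2)

end Coder


section DynkinIdentity

noncomputable def Nm : TA V →ₗ[ℚ] TA V := dl (TensorAlgebra.ι ℚ : V →ₗ[ℚ] TA V)

noncomputable def E2 : TA V ⊗[ℚ] TA V →ₗ[ℚ] TA V :=
  (TensorProduct.lid ℚ (TA V)).toLinearMap ∘ₗ
    TensorProduct.map (εa (V := V)).toLinearMap LinearMap.id

lemma E2_tmul (a b : TA V) : E2 (a ⊗ₜ[ℚ] b) = εa a • b := by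
  simp [E2]

lemma counit (y : TA V) : E2 (Δ V y) = y := by
  have hA : ((Algebra.TensorProduct.lid ℚ (TA V)).toAlgHom.comp
      ((Algebra.TensorProduct.map εa (AlgHom.id ℚ (TA V))).comp (Δ V)))
      = AlgHom.id ℚ (TA V) := by
    apply TensorAlgebra.hom_ext
    refine LinearMap.ext fun v => ?_
    simp [Δ_ι]
  have h2 : ∀ z : TA V ⊗[ℚ] TA V,
      E2 z = (Algebra.TensorProduct.lid ℚ (TA V))
        ((Algebra.TensorProduct.map εa (AlgHom.id ℚ (TA V))) z) := by
    intro z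
    induction z using TensorProduct.induction_on with
    | zero => simp
    | tmul a b => simp [E2_tmul, Algebra.TensorProduct.map_tmul]
    | add z1 z2 h1 h2 => rw [map_add, map_add, map_add, h1, h2]
  rw [h2]
  exact congrArg (fun φ => φ y) hA |>.trans rfl |>.symm ▸ (by
    have := congrArg (fun (φ : TA V →ₐ[ℚ] TA V) => φ y) hA
    simpa using this)

lemma span_principle (S : Submodule ℚ (TA V)) (h1 : (1 : TA V) ∈ S)
    (hstep : ∀ (v : V) (x : TA V), x ∈ S → ιQ v * x ∈ S) : ∀ x, x ∈ S := by
  have key : ∀ x : TA V, ∀ w ∈ S, x * w ∈ S := by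
    intro x
    induction x using TensorAlgebra.induction with
    | algebraMap r =>
        intro w hw
        rw [← Algebra.smul_def]
        exact S.smul_mem r hw
    | ι v => exact fun w hw => hstep v w hw
    | mul x y hx hy => intro w hw; rw [mul_assoc]; exact hx _ (hy w hw)
    | add x y hx hy => intro w hw; rw [add_mul]; exact S.add_mem (hx w hw) (hy w hw)
  intro x
  simpa using key x 1 h1

noncomputable def Fm : TA V →ₗ[ℚ] TA V :=
  (LinearMap.mul' ℚ (TA V)) ∘ₗ (TensorProduct.map Dm LinearMap.id) ∘ₗ (Δ V).toLinearMap

lemma Fm_apply (x : TA V) :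
    Fm x = (LinearMap.mul' ℚ (TA V)) ((TensorProduct.map Dm LinearMap.id) (Δ V x)) := rfl

lemma Fm_rec (v : V) (y : TA V) : Fm (ιQ v * y) = ιQ v * Fm y + ιQ v * y := by
  have helper : (LinearMap.mul' ℚ (TA V) ∘ₗ TensorProduct.map Dm LinearMap.id ∘ₗ
      (LinearMap.mulLeft ℚ (ιQ v ⊗ₜ[ℚ] (1:TA V)) + LinearMap.mulLeft ℚ ((1:TA V) ⊗ₜ[ℚ] ιQ v)))
      = LinearMap.mulLeft ℚ (ιQ v) ∘ₗ (LinearMap.mul' ℚ (TA V) ∘ₗ TensorProduct.map Dm LinearMap.id)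
        + LinearMap.mulLeft ℚ (ιQ v) ∘ₗ E2 := by
    apply TensorProduct.ext'
    intro a b
    simp only [LinearMap.comp_apply, LinearMap.add_apply, LinearMap.mulLeft_apply,
      Algebra.TensorProduct.tmul_mul_tmul, map_add, TensorProduct.map_tmul,
      LinearMap.mul'_apply, E2_tmul, Dm_mul_ι, one_mul, mul_one, LinearMap.id_coe, id_eq,
      Ring.lie_def, sub_mul, add_mul, smul_mul_assoc, mul_smul_comm]
    rw [mul_assoc, mul_assoc]
    abel
  have happ := LinearMap.congr_fun helper (Δ V y)
  have hΔ : Δ V (ιQ v * y) = (ιQ v ⊗ₜ[ℚ] 1) * Δ V y + (1 ⊗ₜ[ℚ] ιQ v) * Δ V y := by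
    rw [map_mul, Δ_ι, add_mul]
  rw [Fm_apply, hΔ]
  simp only [LinearMap.comp_apply, LinearMap.add_apply, LinearMap.mulLeft_apply] at happ
  rw [happ, counit]
  rfl

lemma Nm_rec (v : V) (y : TA V) : Nm (ιQ v * y) = ιQ v * y + ιQ v * Nm y := by
  show dl _ (ιQ v * y) = _
  rw [dl_mul, dl_ι]
  rfl

lemma Dm_one : Dm (V := V) 1 = 0 := by
  have : τ (V := V) 1 = 1 := map_one τ
  simp [Dm, this]

lemma Fm_eq_Nm : ∀ x : TA V, Fm x = Nm x := by
  apply span_principle (LinearMap.eqLocus Fm Nm)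
  · show Fm (1 : TA V) = Nm 1
    have h1 : Δ V (1 : TA V) = 1 ⊗ₜ[ℚ] 1 := by
      rw [map_one]; rfl
    rw [Fm_apply, h1, TensorProduct.map_tmul, LinearMap.mul'_apply, Dm_one]
    show (0 : TA V) * 1 = Nm 1
    rw [zero_mul]
    show (0 : TA V) = dl _ 1
    rw [dl_one]
  · intro v x hx
    have hx' : Fm x = Nm x := hx
    show Fm (ιQ v * x) = Nm (ιQ v * x)
    rw [Fm_rec, Nm_rec, hx']
    abel

lemma prim_D_eq_N {x : TA V} (hx : x ∈ PrimS (V := V)) : Dm x = Nm x := by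
  rw [mem_PrimS] at hx
  rw [← Fm_eq_Nm, Fm_apply, hx, map_add, TensorProduct.map_tmul, TensorProduct.map_tmul,
    map_add, LinearMap.mul'_apply, LinearMap.mul'_apply, Dm_one]
  simp

end DynkinIdentity


section Spectral
open Polynomial

lemma Nm_mul (x y : TA V) : Nm (x * y) = Nm x * y + x * Nm y := dl_mul _ x y

lemma Nm_ι (v : V) : Nm (ιQ v) = ιQ v := dl_ι _ v

lemma Nm_one : Nm (V := V) 1 = 0 := dl_one _

lemma Nm_coder : ∀ x : TA V, Δ V (Nm x) = Emap Nm (Δ V x) :=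
  coder_of_prim_gen Nm Nm_mul (fun v => by rw [Nm_ι]; exact Δ_ι v)

lemma Nm_prim {x : TA V} (hx : x ∈ PrimS (V := V)) : Nm x ∈ PrimS (V := V) :=
  coder_preserves_prim Nm Nm_one Nm_coder hx

lemma aeval_mul_apply (p q : ℚ[X]) (x : TA V) :
    aeval Nm (p * q) x = aeval Nm p (aeval Nm q x) := by
  rw [map_mul]; rfl

lemma aeval_stable (P : Submodule ℚ (TA V)) (hP : ∀ x ∈ P, Nm x ∈ P) (p : ℚ[X])
    {x : TA V} (hx : x ∈ P) : aeval Nm p x ∈ P := by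
  have hpow : ∀ n, (Nm ^ n) x ∈ P := by
    intro n
    induction n with
    | zero => simpa using hx
    | succ n ih =>
        rw [pow_succ', Module.End.mul_apply]
        exact hP _ ih
  induction p using Polynomial.induction_on' with
  | add p q hp hq => rw [map_add]; exact P.add_mem hp hq
  | monomial n r =>
      rw [aeval_monomial, Module.End.mul_apply, Module.algebraMap_end_apply]
      exact P.smul_mem r (hpow n)

lemma aeval_eigen {u : TA V} {c : ℚ} (hu : Nm u = c • u) (p : ℚ[X]) :
    aeval Nm p u = p.eval c • u := by
  have hpow : ∀ n, (Nm ^ n) u = c ^ n • u := by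
    intro n
    induction n with
    | zero => simp
    | succ n ih =>
        rw [pow_succ, Module.End.mul_apply, hu, map_smul, ih, smul_smul, pow_succ]
        ring_nf
  induction p using Polynomial.induction_on' with
  | add p q hp hq => rw [map_add, LinearMap.add_apply, hp, hq, eval_add, add_smul]
  | monomial n r =>
      rw [aeval_monomial, Module.End.mul_apply, hpow n, map_smul,
        Module.algebraMap_end_apply, eval_monomial, smul_smul]
      ring_nf

lemma split : ∀ (s : Finset ℕ) (f : ℕ → ℚ), Set.InjOn f ↑s → ∀ x : TA V,
    aeval Nm (∏ m ∈ s, (X - C (f m))) x = 0 →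
    ∃ g : ℕ → TA V, x = ∑ m ∈ s, g m ∧
      ∀ m ∈ s, Nm (g m) = f m • g m ∧ ∃ q : ℚ[X], g m = aeval Nm q x := by
  intro s
  induction s using Finset.induction_on with
  | empty =>
      intro f _ x hx
      refine ⟨fun _ => 0, ?_, fun m hm => absurd hm (Finset.notMem_empty m)⟩
      simpa using hx
  | @insert a s ha ih =>
      intro f hinj x hx
      rw [Finset.prod_insert ha] at hx
      have hfa : ∀ m ∈ s, f a ≠ f m := by
        intro m hm h
        have heq : a = m := hinj (Finset.mem_insert_self a s) (Finset.mem_insert_of_mem hm) h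
        exact ha (by rw [heq]; exact hm)
      have hco : IsCoprime (X - C (f a)) (∏ m ∈ s, (X - C (f m))) := by
        refine IsCoprime.prod_right fun m hm => ?_
        exact Polynomial.pairwise_coprime_X_sub_C (Function.injective_id) (hfa m hm)
      obtain ⟨u, w, huw⟩ := hco
      set P : ℚ[X] := ∏ m ∈ s, (X - C (f m)) with hP
      set x₁ : TA V := aeval Nm (w * P) x with hx₁
      set x₂ : TA V := aeval Nm (u * (X - C (f a))) x with hx₂
      have hsum : x = x₁ + x₂ := by
        have : aeval Nm (u * (X - C (f a)) + w * P) x = x := by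
          rw [huw, map_one]; rfl
        rw [← this, map_add]
        rw [LinearMap.add_apply]
        abel
      have he1 : Nm x₁ = f a • x₁ := by
        have h0 : aeval Nm (X - C (f a)) x₁ = 0 := by
          rw [hx₁, ← aeval_mul_apply]
          have : (X - C (f a)) * (w * P) = w * ((X - C (f a)) * P) := by ring
          rw [this, aeval_mul_apply, hx, map_zero]
        rw [map_sub, LinearMap.sub_apply, aeval_X, aeval_C,
          Module.algebraMap_end_apply, sub_eq_zero] at h0
        exact h0
      have he2 : aeval Nm P x₂ = 0 := by
        rw [hx₂, ← aeval_mul_apply]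
        have : P * (u * (X - C (f a))) = u * ((X - C (f a)) * P) := by ring
        rw [this, aeval_mul_apply, hx, map_zero]
      have hsub : (↑s : Set ℕ) ⊆ ↑(insert a s) := by
        intro t ht
        simp only [Finset.coe_insert, Set.mem_insert_iff]
        exact Or.inr ht
      obtain ⟨g', hg'sum, hg'⟩ := ih f (hinj.mono hsub) x₂ he2
      refine ⟨Function.update g' a x₁, ?_, ?_⟩
      · rw [Finset.sum_insert ha, Function.update_self]
        have : ∑ m ∈ s, Function.update g' a x₁ m = ∑ m ∈ s, g' m := by
          refine Finset.sum_congr rfl fun m hm => ?_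
          rw [Function.update_of_ne (by rintro rfl; exact ha hm)]
        rw [this, ← hg'sum, hsum]
      · intro m hm
        rcases Finset.mem_insert.mp hm with h | h
        · subst h
          rw [Function.update_self]
          exact ⟨he1, ⟨w * P, rfl⟩⟩
        · rw [Function.update_of_ne (by rintro rfl; exact ha h)]
          obtain ⟨hE, q, hq⟩ := hg' m h
          refine ⟨hE, ⟨q * (u * (X - C (f a))), ?_⟩⟩
          rw [hq, hx₂, ← aeval_mul_apply]

end Spectral


section Friedrichs
open Polynomial

/-- the annihilating polynomial family -/
noncomputable def BIG (d : ℕ) : ℚ[X] := ∏ m ∈ Finset.range d, (X - C ((m:ℚ)+1))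

lemma ann_mono {d1 d2 : ℕ} (h : d1 ≤ d2) {z : TA V} (hz : aeval Nm (BIG d1) z = 0) :
    aeval Nm (BIG d2) z = 0 := by
  have hsub : Finset.range d1 ⊆ Finset.range d2 := Finset.range_subset_range.mpr h
  have : BIG d2 = (∏ m ∈ Finset.range d2 \ Finset.range d1, (X - C ((m:ℚ)+1))) * BIG d1 :=
    (Finset.prod_sdiff hsub).symm
  rw [this, aeval_mul_apply, hz, map_zero]

lemma injOn_range (d : ℕ) : Set.InjOn (fun m : ℕ => (m:ℚ)+1) ↑(Finset.range d) := by
  intro m _ k _ h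
  simp only [add_left_inj, Nat.cast_inj] at h
  exact h

lemma ann : ∀ x : TA V, ∃ d : ℕ,
    aeval Nm (BIG d) (x - algebraMap ℚ (TA V) (εa x)) = 0 := by
  intro x
  induction x using TensorAlgebra.induction with
  | algebraMap r =>
      refine ⟨0, ?_⟩
      rw [AlgHom.commutes]
      simp
  | ι v =>
      refine ⟨1, ?_⟩
      rw [εa_ι, map_zero, sub_zero]
      simp only [BIG, Finset.prod_range_one, Nat.cast_zero, zero_add, map_sub, aeval_X, aeval_C,
        LinearMap.sub_apply, Module.algebraMap_end_apply, Nm_ι]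
      simp
  | mul x y hx hy =>
      obtain ⟨d1, h1⟩ := hx
      obtain ⟨d2, h2⟩ := hy
      set a := algebraMap ℚ (TA V) (εa x) with haa
      set b := algebraMap ℚ (TA V) (εa y) with hbb
      have key : x * y - algebraMap ℚ (TA V) (εa (x * y))
          = (x - a) * (y - b) + εa y • (x - a) + εa x • (y - b) := by
        have hc1 : b * x = x * b := Algebra.commutes (εa y) x
        have hc2 : b * a = a * b := Algebra.commutes (εa y) a
        have e1 : (x - a) * (y - b) = x*y - x*b - a*y + a*b := by noncomm_ring
        have e2 : εa y • (x - a) = x*b - a*b := by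
          rw [Algebra.smul_def, ← hbb, mul_sub, hc1, hc2]
        have e3 : εa x • (y - b) = a*y - a*b := by
          rw [Algebra.smul_def, ← haa, mul_sub]
        rw [map_mul, e1, e2, e3]
        have : algebraMap ℚ (TA V) (εa x * εa y) = a * b := by
          rw [map_mul, haa, hbb]
        rw [this]
        abel
      obtain ⟨g, hgsum, hg⟩ := split (Finset.range d1) (fun m => (m:ℚ)+1) (injOn_range d1)
        (x - a) h1
      obtain ⟨h, hhsum, hh⟩ := split (Finset.range d2) (fun m => (m:ℚ)+1) (injOn_range d2)
        (y - b) h2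
      refine ⟨d1 + d2, ?_⟩
      rw [key]
      rw [map_add, map_add]
      have hz1 : aeval Nm (BIG (d1+d2)) ((x - a) * (y - b)) = 0 := by
        rw [hgsum, hhsum, Finset.sum_mul_sum, map_sum]
        refine Finset.sum_eq_zero fun m hm => ?_
        rw [map_sum]
        refine Finset.sum_eq_zero fun k hk => ?_
        have hgm := (hg m hm).1
        have hhk := (hh k hk).1
        have heig : Nm (g m * h k) = ((m:ℚ) + (k:ℚ) + 2) • (g m * h k) := by
          rw [Nm_mul, hgm, hhk, smul_mul_assoc, mul_smul_comm]
          rw [← add_smul]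
          congr 1
          ring
        rw [aeval_eigen heig]
        have : (BIG (d1+d2)).eval ((m:ℚ) + (k:ℚ) + 2) = 0 := by
          rw [BIG, eval_prod]
          refine Finset.prod_eq_zero (i := m + k + 1) ?_ ?_
          · rw [Finset.mem_range]
            have hm' := Finset.mem_range.mp hm
            have hk' := Finset.mem_range.mp hk
            omega
          · rw [eval_sub, eval_X, eval_C]
            push_cast
            ring
        rw [this, zero_smul]
      have hz2 : aeval Nm (BIG (d1+d2)) (εa y • (x - a)) = 0 := by
        rw [map_smul, ann_mono (Nat.le_add_right d1 d2) h1, smul_zero]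
      have hz3 : aeval Nm (BIG (d1+d2)) (εa x • (y - b)) = 0 := by
        rw [map_smul, ann_mono (Nat.le_add_left d2 d1) h2, smul_zero]
      rw [hz1, hz2, hz3, add_zero, add_zero]
  | add x y hx hy =>
      obtain ⟨d1, h1⟩ := hx
      obtain ⟨d2, h2⟩ := hy
      refine ⟨max d1 d2, ?_⟩
      have e : x + y - algebraMap ℚ (TA V) (εa (x + y))
          = (x - algebraMap ℚ (TA V) (εa x)) + (y - algebraMap ℚ (TA V) (εa y)) := by
        rw [map_add, map_add]
        abel
      rw [e, map_add, ann_mono (le_max_left d1 d2) h1, ann_mono (le_max_right d1 d2) h2,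
        add_zero]

lemma eps_prim {x : TA V} (hx : x ∈ PrimS (V := V)) : εa x = 0 := by
  have hB : ((Algebra.TensorProduct.lid ℚ ℚ).toAlgHom.comp
      ((Algebra.TensorProduct.map εa εa).comp (Δ V))) = εa (V := V) := by
    apply TensorAlgebra.hom_ext
    refine LinearMap.ext fun v => ?_
    simp [Δ_ι]
  rw [mem_PrimS] at hx
  have h2 := congrArg (fun (φ : TA V →ₐ[ℚ] ℚ) => φ x) hB
  simp only [AlgHom.coe_comp, Function.comp_apply, AlgEquiv.toAlgHom_eq_coe,
    AlgHom.coe_coe] at h2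
  rw [hx] at h2
  simp only [map_add, Algebra.TensorProduct.map_tmul, map_one] at h2
  simp only [AlgEquiv.coe_algHom, Algebra.TensorProduct.lid_tmul] at h2
  have : εa x + εa x = εa x := by
    simpa [smul_eq_mul] using h2
  linarith

lemma prim_mem_freeLie {x : TA V} (hx : x ∈ PrimS (V := V)) : x ∈ freeLie V := by
  obtain ⟨d, hd⟩ := ann x
  rw [eps_prim hx, map_zero, sub_zero] at hd
  obtain ⟨g, hgsum, hg⟩ := split (Finset.range d) (fun m => (m:ℚ)+1) (injOn_range d) x hd
  rw [hgsum]
  refine (freeLie V).toSubmodule.sum_mem fun m hm => ?_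
  obtain ⟨heig, q, hq⟩ := hg m hm
  have hprim : g m ∈ PrimS (V := V) := by
    rw [hq]
    exact aeval_stable (PrimS (V := V)) (fun z hz => Nm_prim hz) q hx
  have hD : Dm (g m) = Nm (g m) := prim_D_eq_N hprim
  have hmem : Nm (g m) ∈ freeLie V := by
    rw [← hD]
    exact (Dm_mem_freeLie (g m)).1
  rw [heig] at hmem
  have hne : ((m:ℚ)+1) ≠ 0 := by positivity
  have := (freeLie V).toSubmodule.smul_mem ((m:ℚ)+1)⁻¹ hmem
  rwa [smul_smul, inv_mul_cancel₀ hne, one_smul] at this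

end Friedrichs


section Final

lemma der_bracket (δ : TA V →ₗ[ℚ] TA V)
    (hδ : ∀ x y : TA V, δ (x*y) = δ x * y + x * δ y) (x y : TA V) :
    δ ⁅x, y⁆ = ⁅δ x, y⁆ + ⁅x, δ y⁆ := by
  rw [Ring.lie_def, map_sub, hδ x y, hδ y x, Ring.lie_def, Ring.lie_def]
  abel

lemma der_ext (δ1 δ2 : TA V →ₗ[ℚ] TA V)
    (h1 : ∀ x y : TA V, δ1 (x*y) = δ1 x * y + x * δ1 y)
    (h2 : ∀ x y : TA V, δ2 (x*y) = δ2 x * y + x * δ2 y)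
    (hg : ∀ v : V, δ1 (ιQ v) = δ2 (ιQ v)) : δ1 = δ2 := by
  refine LinearMap.ext fun x => ?_
  induction x using TensorAlgebra.induction with
  | algebraMap r =>
      rw [Algebra.algebraMap_eq_smul_one, map_smul, map_smul, der_one δ1 h1, der_one δ2 h2]
  | ι v => exact hg v
  | mul x y hx hy => rw [h1, h2, hx, hy]
  | add x y hx hy => rw [map_add, map_add, hx, hy]

lemma agree (m : freeLie V →ₗ[ℚ] freeLie V)
    (hm : ∀ x y : freeLie V, m ⁅x, y⁆ = ⁅m x, y⁆ + ⁅x, m y⁆)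
    (δ : TA V →ₗ[ℚ] TA V)
    (hδ : ∀ x y : TA V, δ (x*y) = δ x * y + x * δ y)
    (hgen : ∀ v : V, δ (ιQ v) = ((m ⟨ιQ v, ι_mem_freeLie v⟩ : freeLie V) : TA V)) :
    ∀ x : freeLie V, δ (x : TA V) = ((m x : freeLie V) : TA V) := by
  let K : LieSubalgebra ℚ (TA V) :=
    { carrier := {x : TA V | ∃ h : x ∈ freeLie V, δ x = ((m ⟨x, h⟩ : freeLie V) : TA V)}
      add_mem' := by
        rintro a b ⟨ha, ea⟩ ⟨hb, eb⟩
        refine ⟨(freeLie V).add_mem ha hb, ?_⟩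
        have e : (⟨a + b, (freeLie V).add_mem ha hb⟩ : freeLie V) = ⟨a, ha⟩ + ⟨b, hb⟩ := rfl
        rw [map_add, ea, eb, e, map_add]
        rfl
      zero_mem' := by
        refine ⟨(freeLie V).zero_mem, ?_⟩
        have e : (⟨(0 : TA V), (freeLie V).zero_mem⟩ : freeLie V) = 0 := rfl
        rw [map_zero, e, map_zero]
        rfl
      smul_mem' := by
        rintro c a ⟨ha, ea⟩
        refine ⟨(freeLie V).smul_mem c ha, ?_⟩
        have e : (⟨c • a, (freeLie V).smul_mem c ha⟩ : freeLie V) = c • ⟨a, ha⟩ := rfl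
        rw [map_smul, ea, e, map_smul]
        rfl
      lie_mem' := by
        rintro a b ⟨ha, ea⟩ ⟨hb, eb⟩
        refine ⟨(freeLie V).lie_mem ha hb, ?_⟩
        have e : (⟨⁅a, b⁆, (freeLie V).lie_mem ha hb⟩ : freeLie V)
            = ⁅(⟨a, ha⟩ : freeLie V), (⟨b, hb⟩ : freeLie V)⁆ := rfl
        rw [der_bracket δ hδ, ea, eb, e, hm]
        rfl }
  have hK : freeLie V ≤ K := by
    rw [freeLie, LieSubalgebra.lieSpan_le]
    rintro _ ⟨v, rfl⟩
    exact ⟨ι_mem_freeLie v, hgen v⟩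
  intro x
  obtain ⟨h, e⟩ := hK x.2
  rwa [Subtype.coe_eta] at e

end Final

end Aux

theorem lie_derivation_extends_uniquely_to_hopf_derivation :
    -- extension: unique Hopf-algebra derivation of T(V) extending m
    (∀ m : freeLie V →ₗ[ℚ] freeLie V,
      (∀ x y : freeLie V, m ⁅x, y⁆ = ⁅m x, y⁆ + ⁅x, m y⁆) →
      ∃! δ : TA V →ₗ[ℚ] TA V,
        (∀ x y : TA V, δ (x * y) = δ x * y + x * δ y) ∧
        ((Δ V).toLinearMap ∘ₗ δ
          = (TensorProduct.map δ LinearMap.id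
              + TensorProduct.map LinearMap.id δ) ∘ₗ (Δ V).toLinearMap) ∧
        (∀ x : freeLie V, δ (x : TA V) = ((m x : freeLie V) : TA V))) ∧
    -- converse: any Hopf algebra derivation preserves L(V)
    (∀ δ : TA V →ₗ[ℚ] TA V,
      (∀ x y : TA V, δ (x * y) = δ x * y + x * δ y) →
      ((Δ V).toLinearMap ∘ₗ δ
          = (TensorProduct.map δ LinearMap.id
              + TensorProduct.map LinearMap.id δ) ∘ₗ (Δ V).toLinearMap) →
      ∀ x : TA V, x ∈ freeLie V → δ x ∈ freeLie V) := by
  constructor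
  · -- extension
    intro m hm
    set f : V →ₗ[ℚ] TA V :=
      (freeLie V).toSubmodule.subtype ∘ₗ m ∘ₗ
        (TensorAlgebra.ι ℚ : V →ₗ[ℚ] TA V).codRestrict (freeLie V).toSubmodule
          (fun v => Aux.ι_mem_freeLie v) with hf
    have hfι : ∀ v : V, Aux.dl f (TensorAlgebra.ι ℚ v)
        = ((m ⟨TensorAlgebra.ι ℚ v, Aux.ι_mem_freeLie v⟩ : freeLie V) : TA V) := by
      intro v
      rw [Aux.dl_ι]
      rfl
    have hder := Aux.dl_mul f
    have hmemgen : ∀ v : V, Aux.dl f (TensorAlgebra.ι ℚ v) ∈ freeLie V := by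
      intro v
      rw [hfι v]
      exact (m ⟨TensorAlgebra.ι ℚ v, Aux.ι_mem_freeLie v⟩).2
    have hcoder : ∀ x : TA V, Δ V (Aux.dl f x) = Aux.Emap (Aux.dl f) (Δ V x) :=
      Aux.coder_of_prim_gen (Aux.dl f) hder (fun v =>
        (Aux.mem_PrimS).mp (Aux.freeLie_le_PrimS _ (hmemgen v)))
    refine ⟨Aux.dl f, ⟨hder, ?_, Aux.agree m hm (Aux.dl f) hder hfι⟩, ?_⟩
    · refine LinearMap.ext fun x => ?_
      exact hcoder x
    · rintro δ' ⟨hd', _, ha'⟩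
      refine Aux.der_ext δ' (Aux.dl f) hd' hder fun v => ?_
      rw [hfι v, ← ha' ⟨TensorAlgebra.ι ℚ v, Aux.ι_mem_freeLie v⟩]
  · -- converse
    intro δ hder hcoder x hx
    have hc : ∀ z : TA V, Δ V (δ z) = Aux.Emap δ (Δ V z) := by
      intro z
      exact LinearMap.congr_fun hcoder z
    have hgen : ∀ v : V, δ (TensorAlgebra.ι ℚ v) ∈ freeLie V := by
      intro v
      refine Aux.prim_mem_freeLie (Aux.coder_preserves_prim δ (Aux.der_one δ hder) hc ?_)
      rw [Aux.mem_PrimS]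
      exact Aux.Δ_ι v
    exact Aux.der_preserves_freeLie δ hder hgen x hx


end
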